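/- For every vertex v of SP_9, the set N^-(v) of negative neighbors of v contains neither a triangle all of whose edges are positive nor a triangle all of whose edges are negative. -/

import Mathlib

open Polynomial

/-- GF(9) constructed as GF(3)[x]/(x²+1). -/
abbrev F9 : Type := AdjoinRoot (X ^ 2 + 1 : (ZMod 3)[X])

/-- The class of the polynomial x. -/
noncomputable def ξ : F9 := AdjoinRoot.root _

/-- `a` is a nonzero square in GF(9). -/
def Sq (a : F9) : Prop := a ≠ 0 ∧ ∃ b : F9, b ^ 2 = a

/-- A set of vertices of SP₉ is (signed) triangle-free. -/
def TriFree (S : Set F9) : Prop :=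
  (¬ ∃ a b c, a ∈ S ∧ b ∈ S ∧ c ∈ S ∧ a ≠ b ∧ a ≠ c ∧ b ≠ c ∧
      Sq (a - b) ∧ Sq (b - c) ∧ Sq (a - c)) ∧
  (¬ ∃ a b c, a ∈ S ∧ b ∈ S ∧ c ∈ S ∧ a ≠ b ∧ a ≠ c ∧ b ≠ c ∧
      ¬ Sq (a - b) ∧ ¬ Sq (b - c) ∧ ¬ Sq (a - c))

/-- Explicit model of GF(9). -/
@[ext] structure R9 where
  x : ZMod 3
  y : ZMod 3
deriving DecidableEq, Fintype

namespace R9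

instance : Zero R9 := ⟨⟨0,0⟩⟩
instance : One R9 := ⟨⟨1,0⟩⟩
instance : Add R9 := ⟨fun a b => ⟨a.x+b.x, a.y+b.y⟩⟩
instance : Neg R9 := ⟨fun a => ⟨-a.x, -a.y⟩⟩
instance : Mul R9 := ⟨fun a b => ⟨a.x*b.x - a.y*b.y, a.x*b.y + a.y*b.x⟩⟩

@[simp] lemma zero_x : (0 : R9).x = 0 := rfl
@[simp] lemma zero_y : (0 : R9).y = 0 := rfl
@[simp] lemma one_x : (1 : R9).x = 1 := rfl
@[simp] lemma one_y : (1 : R9).y = 0 := rfl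
@[simp] lemma add_x (a b : R9) : (a+b).x = a.x + b.x := rfl
@[simp] lemma add_y (a b : R9) : (a+b).y = a.y + b.y := rfl
@[simp] lemma neg_x (a : R9) : (-a).x = -a.x := rfl
@[simp] lemma neg_y (a : R9) : (-a).y = -a.y := rfl
@[simp] lemma mul_x (a b : R9) : (a*b).x = a.x*b.x - a.y*b.y := rfl
@[simp] lemma mul_y (a b : R9) : (a*b).y = a.x*b.y + a.y*b.x := rfl

instance : CommRing R9 where
  add_assoc a b c := by ext <;> simp <;> ring
  zero_add a := by ext <;> simp
  add_zero a := by ext <;> simp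
  add_comm a b := by ext <;> simp <;> ring
  neg_add_cancel a := by ext <;> simp
  mul_assoc a b c := by ext <;> simp <;> ring
  one_mul a := by ext <;> simp
  mul_one a := by ext <;> simp
  mul_comm a b := by ext <;> simp <;> ring
  left_distrib a b c := by ext <;> simp <;> ring
  right_distrib a b c := by ext <;> simp <;> ring
  zero_mul a := by ext <;> simp
  mul_zero a := by ext <;> simp
  nsmul := nsmulRec
  zsmul := zsmulRec

end R9

lemma hξ : ξ ^ 2 = -1 := by
  have h := AdjoinRoot.eval₂_root (X ^ 2 + 1 : (ZMod 3)[X])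
  simp only [eval₂_add, eval₂_pow, eval₂_X, eval₂_one] at h
  show AdjoinRoot.root _ ^ 2 = -1
  linear_combination h

noncomputable def φ : R9 →+* F9 where
  toFun p := algebraMap (ZMod 3) F9 p.x + algebraMap (ZMod 3) F9 p.y * ξ
  map_one' := by simp
  map_zero' := by simp
  map_add' p q := by simp only [R9.add_x, R9.add_y, map_add]; ring
  map_mul' p q := by
    simp only [R9.mul_x, R9.mul_y, map_add, map_sub, map_mul]
    linear_combination (-(algebraMap (ZMod 3) F9 p.y * algebraMap (ZMod 3) F9 q.y)) * hξ

lemma φ_eq_mk (p : R9) : φ p = AdjoinRoot.mk _ (C p.x + C p.y * X) := by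
  show algebraMap (ZMod 3) F9 p.x + algebraMap (ZMod 3) F9 p.y * ξ = _
  rw [map_add, map_mul, AdjoinRoot.mk_C, AdjoinRoot.mk_C, AdjoinRoot.mk_X]
  rfl

lemma deg2 : (X ^ 2 + 1 : (ZMod 3)[X]).degree = 2 := by
  have : (X ^ 2 + 1 : (ZMod 3)[X]) = X ^ 2 + C 1 := by simp
  rw [this, degree_X_pow_add_C (by norm_num)]
  rfl

lemma monic2 : (X ^ 2 + 1 : (ZMod 3)[X]).Monic := by
  have : (X ^ 2 + 1 : (ZMod 3)[X]) = X ^ 2 + C 1 := by simp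
  rw [this]
  exact monic_X_pow_add_C 1 (by norm_num)

lemma φ_inj : Function.Injective φ := by
  intro p q h
  have h0 : φ (p - q) = 0 := by rw [map_sub, h, sub_self]
  rw [φ_eq_mk, AdjoinRoot.mk_eq_zero] at h0
  set r := p - q with hr
  have hz : C r.x + C r.y * X = 0 := by
    by_contra hne
    have hd := Polynomial.degree_le_of_dvd h0 hne
    have hle : (C r.x + C r.y * X : (ZMod 3)[X]).degree ≤ 1 := by
      refine le_trans (degree_add_le _ _) ?_
      simp only [max_le_iff]
      refine ⟨le_trans degree_C_le (by norm_num), ?_⟩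
      calc (C r.y * X).degree ≤ (C r.y).degree + (X : (ZMod 3)[X]).degree :=
            degree_mul_le _ _
        _ ≤ 0 + 1 := add_le_add degree_C_le degree_X.le
        _ = 1 := by norm_num
    rw [deg2] at hd
    exact absurd (le_trans hd hle) (by norm_num)
  have hx : r.x = 0 := by
    have := congrArg (fun f => Polynomial.coeff f 0) hz
    simpa using this
  have hy : r.y = 0 := by
    have := congrArg (fun f => Polynomial.coeff f 1) hz
    simpa using this
  have : r = 0 := by ext <;> assumption
  rw [hr] at this
  exact sub_eq_zero.mp this

lemma φ_surj : Function.Surjective φ := by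
  intro z
  obtain ⟨f, rfl⟩ := AdjoinRoot.mk_surjective z
  have hmd := modByMonic_add_div f (X ^ 2 + 1 : (ZMod 3)[X])
  set r := f %ₘ (X ^ 2 + 1) with hrdef
  have hdeg : r.natDegree ≤ 1 := by
    have := degree_modByMonic_lt f monic2
    rw [deg2] at this
    exact natDegree_le_iff_degree_le.mpr (by
      rcases lt_or_ge r.degree 2 with h | h
      · exact Order.le_of_lt_succ (by exact_mod_cast this)
      · exact absurd this (not_lt.mpr h))
  obtain ⟨a, b, hab⟩ := exists_eq_X_add_C_of_natDegree_le_one hdeg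
  refine ⟨⟨b, a⟩, ?_⟩
  rw [φ_eq_mk]
  have : AdjoinRoot.mk (X ^ 2 + 1 : (ZMod 3)[X]) f = AdjoinRoot.mk _ r := by
    rw [← hmd, map_add, map_mul, AdjoinRoot.mk_self, zero_mul, add_zero]
  rw [this, hab]
  congr 1
  ring

noncomputable def e : R9 ≃+* F9 := RingEquiv.ofBijective φ ⟨φ_inj, φ_surj⟩

def SqR (p : R9) : Prop := p ≠ 0 ∧ ∃ q : R9, q ^ 2 = p

instance : DecidablePred SqR := fun p => by unfold SqR; infer_instance

lemma Sq_e (p : R9) : Sq (e p) ↔ SqR p := by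
  constructor
  · rintro ⟨h0, b, hb⟩
    refine ⟨fun h => h0 (by rw [h, map_zero]), ?_⟩
    obtain ⟨q, rfl⟩ := e.surjective b
    exact ⟨q, e.injective (by rw [map_pow, hb])⟩
  · rintro ⟨h0, q, hq⟩
    exact ⟨fun h => h0 (e.injective (by rw [h, map_zero])), e q, by rw [← map_pow, hq]⟩

set_option maxHeartbeats 2000000 in
lemma keyR (pv pa pb pc : R9) :
    ¬ (pa ≠ pv ∧ ¬ SqR (pa - pv) ∧ pb ≠ pv ∧ ¬ SqR (pb - pv) ∧ pc ≠ pv ∧ ¬ SqR (pc - pv) ∧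
      pa ≠ pb ∧ pa ≠ pc ∧ pb ≠ pc ∧
      ((SqR (pa - pb) ∧ SqR (pb - pc) ∧ SqR (pa - pc)) ∨
       (¬ SqR (pa - pb) ∧ ¬ SqR (pb - pc) ∧ ¬ SqR (pa - pc)))) := by
  revert pv pa pb pc
  decide

/-- The negative neighborhood of any vertex of SP₉ is triangle-free. -/
theorem neg_neighborhood_triangle_free (v : F9) :
    TriFree {u : F9 | u ≠ v ∧ ¬ Sq (u - v)} := by
  have hS : ∀ a b : F9, Sq (a - b) ↔ SqR (e.symm a - e.symm b) := by
    intro a b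
    have h : a - b = e (e.symm a - e.symm b) := by
      rw [map_sub, e.apply_symm_apply, e.apply_symm_apply]
    rw [h, Sq_e]
  have hne : ∀ a b : F9, a ≠ b → e.symm a ≠ e.symm b :=
    fun a b h hh => h (by simpa using congrArg e hh)
  constructor
  · rintro ⟨a, b, c, ⟨ha1, ha2⟩, ⟨hb1, hb2⟩, ⟨hc1, hc2⟩, hab, hac, hbc, s1, s2, s3⟩
    exact keyR (e.symm v) (e.symm a) (e.symm b) (e.symm c)
      ⟨hne a v ha1, fun h => ha2 ((hS a v).mpr h), hne b v hb1,
       fun h => hb2 ((hS b v).mpr h), hne c v hc1, fun h => hc2 ((hS c v).mpr h),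
       hne a b hab, hne a c hac, hne b c hbc,
       Or.inl ⟨(hS a b).mp s1, (hS b c).mp s2, (hS a c).mp s3⟩⟩
  · rintro ⟨a, b, c, ⟨ha1, ha2⟩, ⟨hb1, hb2⟩, ⟨hc1, hc2⟩, hab, hac, hbc, s1, s2, s3⟩
    exact keyR (e.symm v) (e.symm a) (e.symm b) (e.symm c)
      ⟨hne a v ha1, fun h => ha2 ((hS a v).mpr h), hne b v hb1,
       fun h => hb2 ((hS b v).mpr h), hne c v hc1, fun h => hc2 ((hS c v).mpr h),
       hne a b hab, hne a c hac, hne b c hbc,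
       Or.inr ⟨fun h => s1 ((hS a b).mpr h), fun h => s2 ((hS b c).mpr h),
               fun h => s3 ((hS a c).mpr h)⟩⟩
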